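/- The map w : ℂ[X] → ℂ sending a nonzero polynomial p = Σₖ aₖXᵏ of degree n (aₙ ≠ 0) to (aₙ/|aₙ|)·eⁿ and sending 0 to 0 is a multiring homomorphism from the ring ℂ[X] to the complex tropical hyperfield: w(pq) = w(p)·w(q) and w(p+q) ∈ w(p)⊞w(q) for all p,q ∈ ℂ[X]. -/

import Mathlib

open Classical in
/-- The shortest arc connecting `a` and `b` on the circle `{z : |z| = |a|}`
(for `|a| = |b|`, `a + b ≠ 0`): the points of the circle lying on the cone
of nonnegative combinations of `a` and `b`. -/
noncomputable def arc (a b : ℂ) : Set ℂ :=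
  {c | ‖c‖ = ‖a‖ ∧
    ∃ l m : ℝ, 0 ≤ l ∧ 0 ≤ m ∧ c = (l : ℂ) * a + (m : ℂ) * b}

open Classical in
/-- The tropical sum of two complex numbers. -/
noncomputable def tropAdd (a b : ℂ) : Set ℂ :=
  if ‖b‖ < ‖a‖ then {a}
  else if ‖a‖ < ‖b‖ then {b}
  else if a + b = 0 then {c | ‖c‖ ≤ ‖a‖}
  else arc a b

/-- Elementwise extension of the tropical addition to subsets. -/
def setTrop (A B : Set ℂ) : Set ℂ :=
  ⋃ a ∈ A, ⋃ b ∈ B, tropAdd a b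

/-- The map `w : ℂ[X] → ℂ` sending a nonzero polynomial with leading
coefficient `aₙ` and degree `n` to `(aₙ/|aₙ|)·eⁿ`, and `0` to `0`. -/
noncomputable def w (p : Polynomial ℂ) : ℂ :=
  if p = 0 then 0
  else (p.leadingCoeff / (‖p.leadingCoeff‖ : ℂ)) *
    ((Real.exp (p.natDegree : ℝ) : ℝ) : ℂ)

open Polynomial in
private lemma abs_w {p : Polynomial ℂ} (hp : p ≠ 0) :
    ‖(w p)‖ = Real.exp (p.natDegree : ℝ) := by
  have h : ‖p.leadingCoeff‖ ≠ 0 :=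
    norm_ne_zero_iff.mpr (leadingCoeff_ne_zero.mpr hp)
  rw [w, if_neg hp, norm_mul, norm_div, Complex.norm_real, Complex.norm_real,
    Real.norm_eq_abs, Real.norm_eq_abs, abs_of_nonneg (norm_nonneg _), div_self h, one_mul,
    abs_of_pos (Real.exp_pos _)]

open Polynomial in
private lemma w_ne_zero {p : Polynomial ℂ} (hp : p ≠ 0) : w p ≠ 0 := by
  intro h
  have := abs_w hp
  rw [h] at this
  simp at this
  exact absurd this (Real.exp_pos _).ne

/-- `w` is a multiring homomorphism from `ℂ[X]` to the complex
tropical hyperfield: `w(pq) = w(p)·w(q)` and `w(p+q) ∈ w(p)⊞w(q)`. -/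
theorem w_multiring_hom (p q : Polynomial ℂ) :
    w (p * q) = w p * w q ∧ w (p + q) ∈ tropAdd (w p) (w q) := by
  constructor
  · by_cases hp : p = 0
    · simp [hp, w]
    by_cases hq : q = 0
    · simp [hq, w]
    have hA : (‖p.leadingCoeff‖ : ℂ) ≠ 0 := by
      exact_mod_cast norm_ne_zero_iff.mpr (Polynomial.leadingCoeff_ne_zero.mpr hp)
    have hB : (‖q.leadingCoeff‖ : ℂ) ≠ 0 := by
      exact_mod_cast norm_ne_zero_iff.mpr (Polynomial.leadingCoeff_ne_zero.mpr hq)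
    simp only [w, hp, hq, mul_ne_zero hp hq, if_neg, Polynomial.leadingCoeff_mul,
      Polynomial.natDegree_mul hp hq]
    rw [norm_mul]
    push_cast [Real.exp_add]
    field_simp
  · by_cases hp : p = 0
    · by_cases hq : q = 0
      · simp [hp, hq, w, tropAdd]
      · have : w q ≠ 0 := w_ne_zero hq
        simp [hp, tropAdd, w, hq, norm_pos_iff.mpr this, not_lt.mpr (norm_nonneg _)]
    by_cases hq : q = 0
    · have : w p ≠ 0 := w_ne_zero hp
      simp [hq, tropAdd, w, hp, norm_pos_iff.mpr this, not_lt.mpr (norm_nonneg _)]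
    rcases lt_trichotomy p.natDegree q.natDegree with hlt | heq | hgt
    · have hd : p.degree < q.degree := Polynomial.degree_lt_degree hlt
      have h1 : (p + q).leadingCoeff = q.leadingCoeff :=
        Polynomial.leadingCoeff_add_of_degree_lt hd
      have hpq : p + q ≠ 0 := fun h => (Polynomial.leadingCoeff_ne_zero.mpr hq)
        (h1 ▸ h ▸ Polynomial.leadingCoeff_zero)
      have h2 : (p + q).natDegree = q.natDegree :=
        Polynomial.natDegree_add_eq_right_of_natDegree_lt hlt
      have hw : w (p + q) = w q := by simp [w, hpq, hq, h1, h2]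
      have habs : ‖(w p)‖ < ‖(w q)‖ := by
        rw [abs_w hp, abs_w hq]
        exact Real.exp_lt_exp.mpr (by exact_mod_cast hlt)
      simp [tropAdd, habs, not_lt.mpr habs.le, hw]
    · -- equal degrees
      have habs : ‖(w p)‖ = ‖(w q)‖ := by
        rw [abs_w hp, abs_w hq, heq]
      by_cases hsum : w p + w q = 0
      · simp only [tropAdd, habs, lt_irrefl, if_neg (lt_irrefl _), if_pos hsum, if_false,
          Set.mem_setOf_eq]
        rw [abs_w hq]
        by_cases hpq : p + q = 0
        · rw [hpq, show w 0 = 0 by simp [w], norm_zero]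
          exact (Real.exp_pos _).le
        · rw [abs_w hpq, Real.exp_le_exp]
          have : (p + q).natDegree ≤ q.natDegree := by
            have := Polynomial.natDegree_add_le p q
            omega
          exact_mod_cast this
      · -- arc case
        have hlc : p.leadingCoeff + q.leadingCoeff ≠ 0 := by
          intro h
          apply hsum
          have hb : q.leadingCoeff = -p.leadingCoeff := by linear_combination h
          have hwq : w q = - w p := by
            rw [w, w, if_neg hp, if_neg hq, heq, hb, norm_neg]
            ring
          rw [hwq]
          ring
        have h1 : (p + q).coeff q.natDegree = p.leadingCoeff + q.leadingCoeff := by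
          rw [Polynomial.coeff_add, Polynomial.leadingCoeff, Polynomial.leadingCoeff, heq]
        have h2 : (p + q).natDegree = q.natDegree := by
          have hle : (p + q).natDegree ≤ q.natDegree := by
            have := Polynomial.natDegree_add_le p q
            omega
          have hge : q.natDegree ≤ (p + q).natDegree :=
            Polynomial.le_natDegree_of_ne_zero (h1 ▸ hlc)
          omega
        have h3 : (p + q).leadingCoeff = p.leadingCoeff + q.leadingCoeff := by
          rw [Polynomial.leadingCoeff, h2, h1]
        have hpq : p + q ≠ 0 := fun h => hlc (by rw [← h3, h, Polynomial.leadingCoeff_zero])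
        simp only [tropAdd, habs, if_neg (lt_irrefl _), if_neg hsum, arc, Set.mem_setOf_eq]
        refine ⟨by rw [abs_w hpq, abs_w hq, h2], ?_⟩
        refine ⟨‖p.leadingCoeff‖ / ‖(p.leadingCoeff + q.leadingCoeff)‖,
          ‖q.leadingCoeff‖ / ‖(p.leadingCoeff + q.leadingCoeff)‖,
          div_nonneg (norm_nonneg _) (norm_nonneg _),
          div_nonneg (norm_nonneg _) (norm_nonneg _), ?_⟩
        have hA : (‖p.leadingCoeff‖ : ℂ) ≠ 0 := by
          exact_mod_cast norm_ne_zero_iff.mpr (Polynomial.leadingCoeff_ne_zero.mpr hp)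
        have hB : (‖q.leadingCoeff‖ : ℂ) ≠ 0 := by
          exact_mod_cast norm_ne_zero_iff.mpr (Polynomial.leadingCoeff_ne_zero.mpr hq)
        have hS : (‖(p.leadingCoeff + q.leadingCoeff)‖ : ℂ) ≠ 0 := by
          exact_mod_cast norm_ne_zero_iff.mpr hlc
        rw [w, w, w, if_neg hp, if_neg hq, if_neg hpq, h2, h3, heq]
        push_cast
        field_simp
    · have hd : q.degree < p.degree := Polynomial.degree_lt_degree hgt
      have h1 : (p + q).leadingCoeff = p.leadingCoeff := by
        rw [add_comm]; exact Polynomial.leadingCoeff_add_of_degree_lt hd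
      have hpq : p + q ≠ 0 := fun h => (Polynomial.leadingCoeff_ne_zero.mpr hp)
        (h1 ▸ h ▸ Polynomial.leadingCoeff_zero)
      have h2 : (p + q).natDegree = p.natDegree :=
        Polynomial.natDegree_add_eq_left_of_natDegree_lt hgt
      have hw : w (p + q) = w p := by simp [w, hpq, hp, h1, h2]
      have habs : ‖(w q)‖ < ‖(w p)‖ := by
        rw [abs_w hp, abs_w hq]
        exact Real.exp_lt_exp.mpr (by exact_mod_cast hgt)
      simp [tropAdd, habs, hw]
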